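/- Let S = ℂ^n with standard idempotents e_1,…,e_n and, for i ≠ j, y^{ij} := d_{e_i⊗e_j}. Let α_{ij} ∈ ℂ for 1 ≤ i < j ≤ n and set P = ∑_{i<j} α_{ij} y^{ij} y^{ji}. Then the associated double bracket ⟨⟨−,−⟩⟩_P is a double Poisson bracket on ℂ^n (i.e., satisfies the double Jacobi identity) if and only if for all i < j < k: α_{ij} α_{ik} + α_{ik} α_{jk} − α_{ij} α_{jk} = 0. -/

import Mathlib

open TensorProduct

set_option synthInstance.maxHeartbeats 1000000
set_option maxHeartbeats 1000000

noncomputable section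

/-- The semisimple algebra `S = ℂ ⊕ ⋯ ⊕ ℂ` (`n` copies). -/
abbrev SC (n : ℕ) : Type := Fin n → ℂ

variable (n : ℕ)

/-- `θ` is a double derivation for the outer bimodule structure on `S ⊗ S`. -/
def IsDD (θ : SC n →ₗ[ℂ] SC n ⊗[ℂ] SC n) : Prop :=
  ∀ a b : SC n,
    θ (a * b) = (a ⊗ₜ[ℂ] (1 : SC n)) * θ b + θ a * ((1 : SC n) ⊗ₜ[ℂ] b)

/-- The space of double derivations `DDer(S)`. -/
def DDer : Submodule ℂ (SC n →ₗ[ℂ] SC n ⊗[ℂ] SC n) where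
  carrier := {θ | IsDD n θ}
  add_mem' := by
    intro θ η hθ hη a b
    simp only [LinearMap.add_apply, hθ a b, hη a b, mul_add, add_mul]
    abel
  zero_mem' := by intro a b; simp
  smul_mem' := by
    intro c θ hθ a b
    simp only [LinearMap.smul_apply, hθ a b, smul_add, mul_smul_comm, smul_mul_assoc]

/-- The map `u ↦ (1 ⊗ s) * u * (t ⊗ 1)`, realizing the inner bimodule action
`(s·θ·t)(u) = θ(u)' t ⊗ s θ(u)''` after composition with `θ`. -/
def innerMap (s t : SC n) : SC n ⊗[ℂ] SC n →ₗ[ℂ] SC n ⊗[ℂ] SC n :=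
  (LinearMap.mulRight ℂ (t ⊗ₜ[ℂ] (1 : SC n))).comp
    (LinearMap.mulLeft ℂ ((1 : SC n) ⊗ₜ[ℂ] s))

lemma innerMap_isDD (s t : SC n) (θ : SC n →ₗ[ℂ] SC n ⊗[ℂ] SC n)
    (hθ : IsDD n θ) : IsDD n ((innerMap n s t).comp θ) := by
  intro a b
  have h1 : ((1 : SC n) ⊗ₜ[ℂ] s) * (a ⊗ₜ[ℂ] (1 : SC n))
      = (a ⊗ₜ[ℂ] (1 : SC n)) * ((1 : SC n) ⊗ₜ[ℂ] s) := by
    simp [Algebra.TensorProduct.tmul_mul_tmul]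
  have h2 : ((1 : SC n) ⊗ₜ[ℂ] b) * (t ⊗ₜ[ℂ] (1 : SC n))
      = (t ⊗ₜ[ℂ] (1 : SC n)) * ((1 : SC n) ⊗ₜ[ℂ] b) := by
    simp [Algebra.TensorProduct.tmul_mul_tmul]
  simp only [LinearMap.comp_apply, hθ a b, innerMap, LinearMap.mulLeft_apply,
    LinearMap.mulRight_apply, mul_add, add_mul]
  congr 1
  · simp only [mul_assoc]
    rw [← mul_assoc, h1, mul_assoc]
  · simp only [mul_assoc]
    rw [h2]

/-- The inner `S`-bimodule action on `DDer(S)`:  `(s·θ·t)(u) = θ(u)' t ⊗ s θ(u)''`. -/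
def innerDD (s t : SC n) (θ : DDer n) : DDer n :=
  ⟨(innerMap n s t).comp θ.1, innerMap_isDD n s t θ.1 θ.2⟩

/-- The `i`-th standard orthogonal idempotent `e_i` of `ℂ^n`. -/
def eC (i : Fin n) : SC n := Pi.single i 1

/-- The inner double derivation `d_x(y) = x (1 ⊗ y) - (y ⊗ 1) x`. -/
def dIn (x : SC n ⊗[ℂ] SC n) : SC n →ₗ[ℂ] SC n ⊗[ℂ] SC n :=
  (LinearMap.mulLeft ℂ x).comp (TensorProduct.mk ℂ (SC n) (SC n) 1)
    - (LinearMap.mulRight ℂ x).comp ((TensorProduct.mk ℂ (SC n) (SC n)).flip 1)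

lemma dIn_isDD (x : SC n ⊗[ℂ] SC n) : IsDD n (dIn n x) := by
  intro a b
  simp only [dIn, LinearMap.sub_apply, LinearMap.comp_apply, TensorProduct.mk_apply,
    LinearMap.flip_apply, LinearMap.mulLeft_apply, LinearMap.mulRight_apply, mul_sub, sub_mul]
  have h1 : ((1 : SC n) ⊗ₜ[ℂ] (a * b)) = ((1 : SC n) ⊗ₜ[ℂ] a) * ((1 : SC n) ⊗ₜ[ℂ] b) := by
    simp [Algebra.TensorProduct.tmul_mul_tmul]
  have h2 : ((a * b) ⊗ₜ[ℂ] (1 : SC n)) = (a ⊗ₜ[ℂ] (1 : SC n)) * (b ⊗ₜ[ℂ] (1 : SC n)) := by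
    simp [Algebra.TensorProduct.tmul_mul_tmul]
  have h3 : (a ⊗ₜ[ℂ] (1 : SC n)) * ((1 : SC n) ⊗ₜ[ℂ] b) = a ⊗ₜ[ℂ] b := by
    simp [Algebra.TensorProduct.tmul_mul_tmul]
  have h4 : ((1 : SC n) ⊗ₜ[ℂ] a) * (b ⊗ₜ[ℂ] (1 : SC n)) = b ⊗ₜ[ℂ] a := by
    simp [Algebra.TensorProduct.tmul_mul_tmul]
  rw [h1, h2]
  simp only [mul_assoc]
  abel


/-- The inner double derivation `y^{ij} = d_{e_i ⊗ e_j}`. -/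
def yC (i j : Fin n) : SC n →ₗ[ℂ] SC n ⊗[ℂ] SC n := dIn n (eC n i ⊗ₜ[ℂ] eC n j)

/-- Auxiliary bilinear map `(x, y) ↦ (w ↦ (1 ⊗ x) * w * (y ⊗ 1))`, used to multiply Sweedler
components: on pure tensors it sends `(x ⊗ y, u ⊗ v)` to `(u y) ⊗ (x v)`. -/
def mixAux (n : ℕ) :
    SC n →ₗ[ℂ] SC n →ₗ[ℂ] (SC n ⊗[ℂ] SC n →ₗ[ℂ] SC n ⊗[ℂ] SC n) :=
  LinearMap.mk₂ ℂ
    (fun x y => (LinearMap.mulRight ℂ (y ⊗ₜ[ℂ] (1 : SC n))).comp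
      (LinearMap.mulLeft ℂ ((1 : SC n) ⊗ₜ[ℂ] x)))
    (fun x x' y => by
      ext w
      simp [TensorProduct.tmul_add, add_mul])
    (fun c x y => by
      ext w
      simp [TensorProduct.tmul_smul, smul_mul_assoc])
    (fun x y y' => by
      ext w
      simp [TensorProduct.add_tmul, mul_add])
    (fun c x y => by
      ext w
      simp [TensorProduct.smul_tmul', mul_smul_comm])

/-- `mixer z w` is, for `z = x ⊗ y` and `w = u ⊗ v`, the element `(u y) ⊗ (x v)`. -/
def mixer (n : ℕ) :
    SC n ⊗[ℂ] SC n →ₗ[ℂ] (SC n ⊗[ℂ] SC n →ₗ[ℂ] SC n ⊗[ℂ] SC n) :=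
  TensorProduct.lift (mixAux n)

/-- The double bracket associated to an ordered monomial `P = θ η` of double derivations:
`⟨⟨x,y⟩⟩_P = η(y)′ θ(x)″ ⊗ θ(x)′ η(y)″ − θ(y)′ η(x)″ ⊗ η(x)′ θ(y)″`. -/
def bracketP (n : ℕ) (θ η : SC n →ₗ[ℂ] SC n ⊗[ℂ] SC n) (x y : SC n) :
    SC n ⊗[ℂ] SC n :=
  mixer n (θ x) (η y) - mixer n (η x) (θ y)

/-- The double bracket `⟨⟨−,−⟩⟩_P` of `P = θ η` as a bilinear map. -/
def bracketOf (n : ℕ) (θ η : SC n →ₗ[ℂ] SC n ⊗[ℂ] SC n) :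
    SC n →ₗ[ℂ] SC n →ₗ[ℂ] SC n ⊗[ℂ] SC n :=
  LinearMap.mk₂ ℂ (fun x y => bracketP n θ η x y)
    (fun x x' y => by simp only [bracketP, map_add, LinearMap.add_apply]; abel)
    (fun c x y => by simp only [bracketP, map_smul, LinearMap.smul_apply, smul_sub])
    (fun x y y' => by simp only [bracketP, map_add]; abel)
    (fun c x y => by simp only [bracketP, map_smul, smul_sub])

/-- `σ(x ⊗ y ⊗ z) = z ⊗ x ⊗ y` on `S ⊗ S ⊗ S`. -/
def sigma3 (n : ℕ) :
    (SC n ⊗[ℂ] SC n) ⊗[ℂ] SC n →ₗ[ℂ] (SC n ⊗[ℂ] SC n) ⊗[ℂ] SC n :=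
  (TensorProduct.assoc ℂ (SC n) (SC n) (SC n)).symm.toLinearMap.comp
    (TensorProduct.comm ℂ (SC n ⊗[ℂ] SC n) (SC n)).toLinearMap

/-- The double Jacobi identity
`⟨⟨a,⟨⟨b,c⟩⟩⟩⟩_L + σ(⟨⟨b,⟨⟨c,a⟩⟩⟩⟩_L) + σ²(⟨⟨c,⟨⟨a,b⟩⟩⟩⟩_L) = 0`,
where `⟨⟨a, u ⊗ v⟩⟩_L = ⟨⟨a, u⟩⟩ ⊗ v`. -/
def DoubleJacobi (n : ℕ) (B : SC n →ₗ[ℂ] SC n →ₗ[ℂ] SC n ⊗[ℂ] SC n) : Prop :=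
  ∀ a b c : SC n,
    TensorProduct.map (B a) LinearMap.id (B b c)
      + sigma3 n (TensorProduct.map (B b) LinearMap.id (B c a))
      + sigma3 n (sigma3 n (TensorProduct.map (B c) LinearMap.id (B a b))) = 0
/- ## Auxiliary development -/

lemma eC_apply (i k : Fin n) : eC n i k = if k = i then 1 else 0 := Pi.single_apply i 1 k

lemma mul_eC (a : SC n) (i : Fin n) : a * eC n i = a i • eC n i := by
  funext k
  simp only [Pi.mul_apply, Pi.smul_apply, eC_apply, smul_eq_mul]
  split
  · next h => subst h; ring
  · ring

lemma eC_mul (a : SC n) (i : Fin n) : eC n i * a = a i • eC n i := by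
  rw [mul_comm]; exact mul_eC n a i

lemma eC_mul_self (i : Fin n) : eC n i * eC n i = eC n i := by
  rw [eC_mul, eC_apply]; simp

lemma yC_apply (i j : Fin n) (a : SC n) :
    yC n i j a = (a j - a i) • (eC n i ⊗ₜ[ℂ] eC n j) := by
  simp only [yC, dIn, LinearMap.sub_apply, LinearMap.comp_apply, TensorProduct.mk_apply,
    LinearMap.flip_apply, LinearMap.mulLeft_apply, LinearMap.mulRight_apply,
    Algebra.TensorProduct.tmul_mul_tmul, mul_one, one_mul, eC_mul, mul_eC]
  rw [TensorProduct.tmul_smul, ← TensorProduct.smul_tmul']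
  module

lemma mixer_tmul (x y u v : SC n) :
    mixer n (x ⊗ₜ[ℂ] y) (u ⊗ₜ[ℂ] v) = (u * y) ⊗ₜ[ℂ] (x * v) := by
  simp only [mixer, mixAux, TensorProduct.lift.tmul, LinearMap.mk₂_apply,
    LinearMap.comp_apply, LinearMap.mulLeft_apply, LinearMap.mulRight_apply,
    Algebra.TensorProduct.tmul_mul_tmul, one_mul, mul_one]

lemma bracketOf_yC_apply (i j : Fin n) (a b : SC n) :
    bracketOf n (yC n i j) (yC n j i) a b
      = ((a j - a i) * (b j - b i)) • (eC n i ⊗ₜ[ℂ] eC n j)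
        - ((a j - a i) * (b j - b i)) • (eC n j ⊗ₜ[ℂ] eC n i) := by
  have h1 : bracketOf n (yC n i j) (yC n j i) a b = bracketP n (yC n i j) (yC n j i) a b := rfl
  rw [h1, bracketP, yC_apply, yC_apply, yC_apply, yC_apply]
  simp only [map_smul, LinearMap.smul_apply, mixer_tmul, eC_mul_self, smul_smul]
  module

/-- The total bracket of the statement. -/
def BBig (α : Fin n → Fin n → ℂ) : SC n →ₗ[ℂ] SC n →ₗ[ℂ] SC n ⊗[ℂ] SC n :=
  ∑ i, ∑ j, if i < j then α i j • bracketOf n (yC n i j) (yC n j i) else 0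

/-- Antisymmetrized coefficient matrix. -/
def Af {n : ℕ} (α : Fin n → Fin n → ℂ) (p q : Fin n) : ℂ :=
  if p < q then α p q else if q < p then -(α q p) else 0

lemma BB_apply (α : Fin n → Fin n → ℂ) (a b : SC n) :
    BBig n α a b
      = ∑ p, ∑ q, (Af α p q * ((a q - a p) * (b q - b p))) • (eC n p ⊗ₜ[ℂ] eC n q) := by
  have hite : ∀ (P : Prop) [inst : Decidable P]
      (F : SC n →ₗ[ℂ] SC n →ₗ[ℂ] SC n ⊗[ℂ] SC n),
      ((if P then F else 0) a) b = if P then F a b else 0 := by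
    intro P inst F; split <;> simp
  have hL : BBig n α a b
      = ∑ i, ∑ j,
          ((if i < j then (α i j * ((a j - a i) * (b j - b i))) • (eC n i ⊗ₜ[ℂ] eC n j) else 0)
            + (if i < j then (-(α i j * ((a i - a j) * (b i - b j)))) • (eC n j ⊗ₜ[ℂ] eC n i)
                else 0)) := by
    rw [BBig, LinearMap.sum_apply, LinearMap.sum_apply]
    refine Finset.sum_congr rfl fun i _ => ?_
    rw [LinearMap.sum_apply, LinearMap.sum_apply]
    refine Finset.sum_congr rfl fun j _ => ?_
    rw [hite]
    split
    · rw [LinearMap.smul_apply, LinearMap.smul_apply, bracketOf_yC_apply]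
      module
    · rw [add_zero]
  have key : ∀ p q : Fin n,
      (Af α p q * ((a q - a p) * (b q - b p))) • (eC n p ⊗ₜ[ℂ] eC n q)
        = (if p < q then (α p q * ((a q - a p) * (b q - b p))) • (eC n p ⊗ₜ[ℂ] eC n q) else 0)
          + (if q < p then (-(α q p * ((a q - a p) * (b q - b p)))) • (eC n p ⊗ₜ[ℂ] eC n q)
              else 0) := by
    intro p q
    rcases lt_trichotomy p q with h | rfl | h
    · rw [if_pos h, if_neg (asymm h), add_zero, Af, if_pos h]
    · rw [if_neg (lt_irrefl p), if_neg (lt_irrefl p), add_zero, Af, if_neg (lt_irrefl p),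
        if_neg (lt_irrefl p), zero_mul, zero_smul]
    · rw [if_neg (asymm h), if_pos h, zero_add, Af, if_neg (asymm h), if_pos h, neg_mul]
  rw [hL]
  simp only [key, Finset.sum_add_distrib]
  congr 1
  exact Finset.sum_comm.symm

/-- Basis of the triple tensor product. -/
def b3 : Module.Basis ((Fin n × Fin n) × Fin n) ℂ ((SC n ⊗[ℂ] SC n) ⊗[ℂ] SC n) :=
  Module.Basis.tensorProduct
    (Module.Basis.tensorProduct (Pi.basisFun ℂ (Fin n)) (Pi.basisFun ℂ (Fin n)))
    (Pi.basisFun ℂ (Fin n))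

/-- Coordinate functional on the triple tensor product. -/
def coord3 (p q r : Fin n) : (SC n ⊗[ℂ] SC n) ⊗[ℂ] SC n →ₗ[ℂ] ℂ :=
  Finsupp.lapply ((p, q), r) ∘ₗ (b3 n).repr.toLinearMap

lemma coord3_tmul (p q r : Fin n) (x y z : SC n) :
    coord3 n p q r ((x ⊗ₜ[ℂ] y) ⊗ₜ[ℂ] z) = x p * y q * z r := by
  simp [coord3, b3, Module.Basis.tensorProduct_repr_tmul_apply]
  ring

lemma coord3_zero_iff (T : (SC n ⊗[ℂ] SC n) ⊗[ℂ] SC n) :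
    T = 0 ↔ ∀ p q r, coord3 n p q r T = 0 := by
  constructor
  · rintro rfl p q r; simp
  · intro h
    have : (b3 n).repr T = 0 := by
      ext x
      obtain ⟨⟨p, q⟩, r⟩ := x
      simpa [coord3] using h p q r
    simpa using (b3 n).repr.map_eq_zero_iff.mp (by simpa using this)

lemma coord3_sigma3 (p q r : Fin n) (T : (SC n ⊗[ℂ] SC n) ⊗[ℂ] SC n) :
    coord3 n p q r (sigma3 n T) = coord3 n q r p T := by
  induction T using TensorProduct.induction_on with
  | zero => simp
  | tmul w z =>
    induction w using TensorProduct.induction_on with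
    | zero => simp [TensorProduct.zero_tmul]
    | tmul x y =>
      simp only [sigma3, LinearMap.comp_apply, LinearEquiv.coe_coe, TensorProduct.comm_tmul,
        TensorProduct.assoc_symm_tmul, coord3_tmul]
      ring
    | add u v hu hv =>
      simp only [TensorProduct.add_tmul, map_add, hu, hv]
  | add u v hu hv => simp only [map_add, hu, hv]

lemma sum_ite_const (P : Prop) [inst : Decidable P] (f : Fin n → ℂ) :
    (∑ x, if P then f x else 0) = if P then ∑ x, f x else 0 := by
  split <;> simp

lemma coord3_map (α : Fin n → Fin n → ℂ) (a b c : SC n) (p q r : Fin n) :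
    coord3 n p q r (TensorProduct.map (BBig n α a) LinearMap.id (BBig n α b c))
      = Af α p q * (a q - a p)
          * (Af α q r * ((b r - b q) * (c r - c q))
              - Af α p r * ((b r - b p) * (c r - c p))) := by
  rw [BB_apply n α b c]
  simp only [map_sum, map_smul, TensorProduct.map_tmul, LinearMap.id_coe, id_eq]
  simp only [BB_apply n α a]
  simp only [TensorProduct.sum_tmul, TensorProduct.smul_tmul', map_sum, map_smul,
    coord3_tmul, eC_apply, smul_eq_mul]
  simp only [Pi.smul_apply, smul_eq_mul, mul_ite, ite_mul, mul_one, mul_zero, one_mul,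
    zero_mul, mul_sub, sub_mul, sub_zero, zero_sub, Finset.sum_sub_distrib, Finset.sum_neg_distrib,
    eC_apply, sum_ite_const, Finset.sum_ite_eq, Finset.sum_ite_eq', Finset.mem_univ, if_true]
  ring

lemma Af_antisymm (α : Fin n → Fin n → ℂ) (p q : Fin n) : Af α q p = -Af α p q := by
  rcases lt_trichotomy p q with h | rfl | h
  · simp [Af, h, asymm h]
  · simp [Af]
  · simp [Af, h, asymm h]

lemma Kzero (α : Fin n → Fin n → ℂ)
    (h : ∀ i j k : Fin n, i < j → j < k → α i j * α i k + α i k * α j k - α i j * α j k = 0)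
    (p q r : Fin n) (hpq : p ≠ q) (hqr : q ≠ r) (hpr : p ≠ r) :
    Af α p q * Af α q r - Af α p q * Af α p r - Af α p r * Af α q r = 0 := by
  rcases lt_or_gt_of_ne hpq with h1 | h1 <;> rcases lt_or_gt_of_ne hqr with h2 | h2 <;>
      rcases lt_or_gt_of_ne hpr with h3 | h3
  · -- p < q < r
    have e1 : Af α p q = α p q := by simp [Af, h1]
    have e2 : Af α q r = α q r := by simp [Af, h2]
    have e3 : Af α p r = α p r := by simp [Af, h3]
    rw [e1, e2, e3]; linear_combination -(h p q r h1 h2)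
  · exact absurd (h1.trans h2) (asymm h3)
  · -- p < r < q
    have e1 : Af α p q = α p q := by simp [Af, h1]
    have e2 : Af α q r = -(α r q) := by simp [Af, h2, asymm h2]
    have e3 : Af α p r = α p r := by simp [Af, h3]
    rw [e1, e2, e3]; linear_combination -(h p r q h3 h2)
  · -- r < p < q
    have e1 : Af α p q = α p q := by simp [Af, h1]
    have e2 : Af α q r = -(α r q) := by simp [Af, h2, asymm h2]
    have e3 : Af α p r = -(α r p) := by simp [Af, h3, asymm h3]
    rw [e1, e2, e3]; linear_combination -(h r p q h3 h1)
  · -- q < p < r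
    have e1 : Af α p q = -(α q p) := by simp [Af, h1, asymm h1]
    have e2 : Af α q r = α q r := by simp [Af, h2]
    have e3 : Af α p r = α p r := by simp [Af, h3]
    rw [e1, e2, e3]; linear_combination -(h q p r h1 h3)
  · -- q < r < p
    have e1 : Af α p q = -(α q p) := by simp [Af, h1, asymm h1]
    have e2 : Af α q r = α q r := by simp [Af, h2]
    have e3 : Af α p r = -(α r p) := by simp [Af, h3, asymm h3]
    rw [e1, e2, e3]; linear_combination -(h q r p h2 h3)
  · exact absurd (h3.trans h2) (asymm h1)
  · -- r < q < p
    have e1 : Af α p q = -(α q p) := by simp [Af, h1, asymm h1]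
    have e2 : Af α q r = -(α r q) := by simp [Af, h2, asymm h2]
    have e3 : Af α p r = -(α r p) := by simp [Af, h3, asymm h3]
    rw [e1, e2, e3]; linear_combination -(h r q p h2 h1)

/-- For `S = ℂ^n` and `P = ∑_{i<j} α_{ij} y^{ij} y^{ji}`, the associated
double bracket is a double Poisson bracket (i.e. satisfies the double Jacobi identity) if and
only if `α_{ij} α_{ik} + α_{ik} α_{jk} − α_{ij} α_{jk} = 0` for all `i < j < k`. -/
theorem sum_of_y_cycles_double_poisson_iff (n : ℕ) (α : Fin n → Fin n → ℂ) :
    DoubleJacobi n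
        (∑ i, ∑ j, if i < j then α i j • bracketOf n (yC n i j) (yC n j i) else 0) ↔
      ∀ i j k : Fin n, i < j → j < k →
        α i j * α i k + α i k * α j k - α i j * α j k = 0 := by
  show DoubleJacobi n (BBig n α) ↔ _
  have coordJ : ∀ a b c : SC n, ∀ p q r : Fin n,
      coord3 n p q r
        (TensorProduct.map (BBig n α a) LinearMap.id (BBig n α b c)
          + sigma3 n (TensorProduct.map (BBig n α b) LinearMap.id (BBig n α c a))
          + sigma3 n (sigma3 n (TensorProduct.map (BBig n α c) LinearMap.id (BBig n α a b))))
        = (a q - a p) * ((b r - b q) * ((c r - c p)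
            * (Af α p q * Af α q r - Af α p q * Af α p r - Af α p r * Af α q r))) := by
    intro a b c p q r
    rw [map_add, map_add, coord3_sigma3, coord3_sigma3, coord3_sigma3,
      coord3_map, coord3_map, coord3_map,
      Af_antisymm n α p r, Af_antisymm n α p q, Af_antisymm n α q r]
    ring
  constructor
  · intro H i j k hij hjk
    have hik : i < k := hij.trans hjk
    have h0 := H (eC n j) (eC n k) (eC n k)
    have h1 : coord3 n i j k
        (TensorProduct.map (BBig n α (eC n j)) LinearMap.id (BBig n α (eC n k) (eC n k))
          + sigma3 n (TensorProduct.map (BBig n α (eC n k)) LinearMap.id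
              (BBig n α (eC n k) (eC n j)))
          + sigma3 n (sigma3 n (TensorProduct.map (BBig n α (eC n k)) LinearMap.id
              (BBig n α (eC n j) (eC n k))))) = 0 := by
      rw [h0, map_zero]
    rw [coordJ] at h1
    simp only [eC_apply, hij.ne, hjk.ne, hik.ne, if_true, if_false, eq_self_iff_true,
      sub_zero, one_mul] at h1
    have e1 : Af α i j = α i j := by simp [Af, hij]
    have e2 : Af α j k = α j k := by simp [Af, hjk]
    have e3 : Af α i k = α i k := by simp [Af, hik]
    rw [e1, e2, e3] at h1
    linear_combination -h1
  · intro h a b c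
    rw [coord3_zero_iff]
    intro p q r
    rw [coordJ]
    rcases eq_or_ne p q with rfl | hpq
    · simp
    rcases eq_or_ne q r with rfl | hqr
    · simp
    rcases eq_or_ne p r with rfl | hpr
    · simp
    rw [Kzero n α h p q r hpq hqr hpr, mul_zero, mul_zero, mul_zero]

end
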